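/- Let S and A be nonempty finite types, p : S → A → PMF S, r : S → A → ℝ, and γ ∈ [0,1). Then the Bellman optimality operator T, defined by (T V)(s) = max over a ∈ A of (r(s,a) + γ · ∑_{s'} p(s'∣s,a) · V(s')), has exactly one fixed point V* : S → ℝ satisfying T V* = V*. -/

import Mathlib

/-- The Bellman optimality operator of a finite MDP:
`(T V)(s) = max_{a ∈ A} (r s a + γ * ∑ s', p(s'|s,a) * V s')`. -/
noncomputable def bellmanOpt {S A : Type*} [Fintype S] [Fintype A] [Nonempty A]
    (p : S → A → PMF S) (r : S → A → ℝ) (γ : ℝ) (V : S → ℝ) : S → ℝ :=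
  fun s => Finset.univ.sup' Finset.univ_nonempty
    (fun a : A => r s a + γ * ∑ s' : S, (p s a s').toReal * V s')

lemma pmf_sum_toReal_eq_one {S : Type*} [Fintype S] (q : PMF S) :
    ∑ s' : S, (q s').toReal = 1 := by
  have h := q.tsum_coe
  rw [tsum_fintype] at h
  rw [← ENNReal.toReal_sum (fun a _ => q.apply_ne_top a), h, ENNReal.toReal_one]

lemma sup'_abs_sub_le {A : Type*} [Fintype A] [Nonempty A] (f g : A → ℝ) (c : ℝ)
    (h : ∀ a, |f a - g a| ≤ c) :
    |Finset.univ.sup' Finset.univ_nonempty f - Finset.univ.sup' Finset.univ_nonempty g| ≤ c := by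
  rw [abs_sub_le_iff]
  constructor
  · rw [sub_le_iff_le_add]
    apply Finset.sup'_le
    intro a _
    have := (abs_sub_le_iff.mp (h a)).1
    have hg : g a ≤ Finset.univ.sup' Finset.univ_nonempty g :=
      Finset.le_sup' g (Finset.mem_univ a)
    linarith
  · rw [sub_le_iff_le_add]
    apply Finset.sup'_le
    intro a _
    have := (abs_sub_le_iff.mp (h a)).2
    have hf : f a ≤ Finset.univ.sup' Finset.univ_nonempty f :=
      Finset.le_sup' f (Finset.mem_univ a)
    linarith

lemma bellmanOpt_lipschitz {S A : Type*} [Fintype S] [Fintype A] [Nonempty A]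
    (p : S → A → PMF S) (r : S → A → ℝ) (γ : ℝ) (hγ0 : 0 ≤ γ) :
    LipschitzWith ⟨γ, hγ0⟩ (bellmanOpt p r γ) := by
  apply LipschitzWith.of_dist_le_mul
  intro V W
  have hd : (0:ℝ) ≤ γ * dist V W := mul_nonneg hγ0 dist_nonneg
  show dist (bellmanOpt p r γ V) (bellmanOpt p r γ W) ≤ γ * dist V W
  rw [dist_pi_le_iff hd]
  intro s
  rw [Real.dist_eq]
  apply sup'_abs_sub_le
  intro a
  have key : ∀ s' : S, |(p s a s').toReal * V s' - (p s a s').toReal * W s'|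
      ≤ (p s a s').toReal * dist V W := by
    intro s'
    rw [← mul_sub, abs_mul, abs_of_nonneg ENNReal.toReal_nonneg]
    apply mul_le_mul_of_nonneg_left _ ENNReal.toReal_nonneg
    rw [← Real.dist_eq]
    exact dist_le_pi_dist V W s'
  calc |(r s a + γ * ∑ s' : S, (p s a s').toReal * V s')
        - (r s a + γ * ∑ s' : S, (p s a s').toReal * W s')|
      = γ * |∑ s' : S, ((p s a s').toReal * V s' - (p s a s').toReal * W s')| := by
        rw [Finset.sum_sub_distrib, add_sub_add_left_eq_sub, ← mul_sub, abs_mul,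
          abs_of_nonneg hγ0]
    _ ≤ γ * ∑ s' : S, |(p s a s').toReal * V s' - (p s a s').toReal * W s'| :=
        mul_le_mul_of_nonneg_left (Finset.abs_sum_le_sum_abs _ _) hγ0
    _ ≤ γ * ∑ s' : S, (p s a s').toReal * dist V W :=
        mul_le_mul_of_nonneg_left (Finset.sum_le_sum fun s' _ => key s') hγ0
    _ = γ * dist V W := by
        rw [← Finset.sum_mul, pmf_sum_toReal_eq_one (p s a), one_mul]

/-- The Bellman optimality operator has exactly one fixed point. -/
theorem bellmanOpt_existsUnique_fixedPoint {S A : Type*} [Fintype S] [Fintype A]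
    [Nonempty S] [Nonempty A]
    (p : S → A → PMF S) (r : S → A → ℝ) (γ : ℝ) (hγ0 : 0 ≤ γ) (hγ1 : γ < 1) :
    ∃! Vstar : S → ℝ, bellmanOpt p r γ Vstar = Vstar := by
  have hC : ContractingWith ⟨γ, hγ0⟩ (bellmanOpt p r γ) :=
    ⟨by exact_mod_cast hγ1, bellmanOpt_lipschitz p r γ hγ0⟩
  refine ⟨hC.fixedPoint (bellmanOpt p r γ), hC.fixedPoint_isFixedPt, ?_⟩
  intro V hV
  exact hC.fixedPoint_unique hV
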